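/- Let p and Q be random variables with Q > 0 almost surely, let F be a random variable with F ≤ (p · ε) / Q² almost surely for some ε > 0, and let u be a real number. Define K_u = p · ε - Q² · u and μ = E[K_u], and suppose μ < 0. Then for any even positive integer n with E[(K_u - μ)^n] finite, P[F ≥ u] ≤ E[(K_u - μ)^n] / μ^n. -/
import Mathlib


open MeasureTheory

theorem cmb_fractional_flag_bound {Ω : Type*} [MeasurableSpace Ω] (μ : Measure Ω)
    [IsProbabilityMeasure μ] (F p Q : Ω → ℝ) (ε : ℝ) (hε : 0 < ε)
    (hFmeas : Measurable F) (hpmeas : Measurable p) (hQmeas : Measurable Q)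
    (hQpos : ∀ᵐ ω ∂μ, 0 < Q ω)
    (hFp : ∀ᵐ ω ∂μ, F ω ≤ p ω * ε / (Q ω) ^ 2) (u : ℝ)
    (hKint : Integrable (fun ω => p ω * ε - (Q ω) ^ 2 * u) μ)
    (hμneg : (∫ ω, p ω * ε - (Q ω) ^ 2 * u ∂μ) < 0)
    (n : ℕ) (hn : 0 < n) (hneven : Even n)
    (hcm : Integrable
      (fun ω => ((p ω * ε - (Q ω) ^ 2 * u)
        - ∫ ω', p ω' * ε - (Q ω') ^ 2 * u ∂μ) ^ n) μ) :
    (μ {ω | u ≤ F ω}).toReal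
      ≤ (∫ ω, ((p ω * ε - (Q ω) ^ 2 * u)
            - ∫ ω', p ω' * ε - (Q ω') ^ 2 * u ∂μ) ^ n ∂μ)
          / (∫ ω, p ω * ε - (Q ω) ^ 2 * u ∂μ) ^ n := by
  set m : ℝ := ∫ ω', p ω' * ε - (Q ω') ^ 2 * u ∂μ with hm
  set g : Ω → ℝ := fun ω => ((p ω * ε - (Q ω) ^ 2 * u) - m) ^ n with hg
  have hmne : m ≠ 0 := ne_of_lt hμneg
  have hc : (0:ℝ) < m ^ n := hneven.pow_pos hmne
  have hgnn : 0 ≤ᵐ[μ] g := Filter.Eventually.of_forall fun ω => hneven.pow_nonneg _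
  -- a.e. inclusion of events
  have hsub : ∀ᵐ ω ∂μ, ω ∈ {ω | u ≤ F ω} → ω ∈ {ω | m ^ n ≤ g ω} := by
    filter_upwards [hQpos, hFp] with ω hQ hF hu
    have hQ2 : (0:ℝ) < (Q ω) ^ 2 := by positivity
    have h1 : u * (Q ω) ^ 2 ≤ p ω * ε := by
      have : u ≤ p ω * ε / (Q ω) ^ 2 := le_trans hu hF
      calc u * (Q ω) ^ 2 ≤ (p ω * ε / (Q ω) ^ 2) * (Q ω) ^ 2 :=
            mul_le_mul_of_nonneg_right this hQ2.le
        _ = p ω * ε := by field_simp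
    have hK : 0 ≤ p ω * ε - (Q ω) ^ 2 * u := by nlinarith
    have h2 : -m ≤ (p ω * ε - (Q ω) ^ 2 * u) - m := by linarith
    have h3 : (-m) ^ n ≤ ((p ω * ε - (Q ω) ^ 2 * u) - m) ^ n :=
      pow_le_pow_left₀ (by linarith) h2 n
    simpa [hneven.neg_pow, g] using h3
  have hmono : μ {ω | u ≤ F ω} ≤ μ {ω | m ^ n ≤ g ω} := measure_mono_ae hsub
  have hmarkov : m ^ n * (μ {ω | m ^ n ≤ g ω}).toReal ≤ ∫ ω, g ω ∂μ :=
    mul_meas_ge_le_integral_of_nonneg hgnn hcm (m ^ n)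
  have key : m ^ n * (μ {ω | u ≤ F ω}).toReal ≤ ∫ ω, g ω ∂μ := by
    refine le_trans ?_ hmarkov
    exact mul_le_mul_of_nonneg_left (ENNReal.toReal_mono (measure_ne_top _ _) hmono) hc.le
  exact (le_div_iff₀' hc).mpr key
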